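/- arXiv:1611.04700 — 5 statements merged into one kernel-verified Lean document; each statement's English description precedes it below -/
import Mathlib

section
/- Let α ∈ S_n and let σ = (a₁ a₂ … a_d) be a d-cycle in S_n. If a₁,…,a_d all lie in pairwise distinct cycles of α, of lengths i₁,…,i_d respectively, then in σα the points a₁,…,a_d all lie in one common cycle of length i₁ + ⋯ + i_d, and all other cycles of α are unchanged. -/
private lemma exists_block_aux (g : ℕ → ℕ) : ∀ (d m : ℕ), m < ∑ s ∈ Finset.range d, g s →
    ∃ t, t < d ∧ (∑ s ∈ Finset.range t, g s) ≤ m ∧ m < (∑ s ∈ Finset.range t, g s) + g t := by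
  intro d
  induction d with
  | zero => simp
  | succ d ih =>
    intro m hm
    by_cases h : m < ∑ s ∈ Finset.range d, g s
    · obtain ⟨t, ht, h1, h2⟩ := ih m h
      exact ⟨t, ht.trans (Nat.lt_succ_self d), h1, h2⟩
    · exact ⟨d, Nat.lt_succ_self d, Nat.le_of_not_lt h,
        by rwa [Finset.sum_range_succ] at hm⟩

open Fin.NatCast Fin.CommRing

/-- Let `α ∈ S_n` and `σ = (a₁ a₂ … a_d)` a `d`-cycle.  If `a₁,…,a_d` lie in pairwise
distinct cycles of `α`, of lengths `i₁,…,i_d`, then in `σα` (apply `α` first) the points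
`a₁,…,a_d` all lie in one common cycle of length `i₁ + ⋯ + i_d`, and all other cycles
of `α` are unchanged. -/
theorem join_cycles (n d : ℕ) (α : Equiv.Perm (Fin n)) (a : Fin d → Fin n)
    (ha : Function.Injective a) (i : Fin d → ℕ)
    (hdist : ∀ k l, k ≠ l → ¬ α.SameCycle (a k) (a l))
    (hlen : ∀ k, Function.minimalPeriod ⇑α (a k) = i k) :
    (∀ k l : Fin d, ((List.ofFn a).formPerm * α).SameCycle (a k) (a l)) ∧
    (∀ k : Fin d,
        Function.minimalPeriod ⇑((List.ofFn a).formPerm * α) (a k) = ∑ k, i k) ∧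
    (∀ x : Fin n, (∀ k, ¬ α.SameCycle x (a k)) →
        ((List.ofFn a).formPerm * α) x = α x) := by
  set σ := (List.ofFn a).formPerm with hσdef
  set β := σ * α with hβdef
  have hnodup : (List.ofFn a).Nodup := List.nodup_ofFn.mpr ha
  have hσ_fix : ∀ x : Fin n, (∀ k, x ≠ a k) → σ x = x := by
    intro x hx
    apply List.formPerm_apply_of_notMem
    simp only [List.mem_ofFn, Set.mem_range, not_exists]
    intro k hk
    exact hx k hk.symm
  have hthird : ∀ x : Fin n, (∀ k, ¬ α.SameCycle x (a k)) → β x = α x := by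
    intro x hx
    rw [hβdef, Equiv.Perm.mul_apply]
    apply hσ_fix
    intro k hk
    exact hx k ⟨1, by simpa using hk⟩
  rcases Nat.eq_zero_or_pos d with rfl | hd
  · exact ⟨fun k => k.elim0, fun k => k.elim0, hthird⟩
  haveI : NeZero d := ⟨hd.ne'⟩
  -- σ sends a j to a (j+1)
  have hσ_a : ∀ j : Fin d, σ (a j) = a (j + 1) := by
    intro j
    have h1 : (List.ofFn a)[(j : ℕ)]'(by simp) = a j := by simp
    have h2 := List.formPerm_apply_getElem (List.ofFn a) hnodup j (by simp)
    rw [h1] at h2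
    rw [hσdef, h2]
    simp only [List.getElem_ofFn]
    congr 1
    apply Fin.ext
    simp only [List.length_ofFn, Fin.add_def, Fin.val_one']
    conv_lhs => rw [Nat.add_mod]
    conv_rhs => rw [Nat.add_mod, Nat.mod_mod_of_dvd 1 dvd_rfl]
  have hipos : ∀ j : Fin d, 0 < i j := by
    intro j
    rw [← hlen j]
    apply Function.IsPeriodicPt.minimalPeriod_pos (n := orderOf α) (orderOf_pos α)
    show α^[orderOf α] (a j) = a j
    rw [← Equiv.Perm.coe_pow, pow_orderOf_eq_one]
    rfl
  have hnotmem : ∀ (j : Fin d) (r : ℕ), 0 < r → r < i j → ∀ l, (α ^ r) (a j) ≠ a l := by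
    intro j r hr0 hr l h
    by_cases hlj : l = j
    · subst hlj
      have hper : Function.IsPeriodicPt ⇑α r (a l) := by
        show α^[r] (a l) = a l
        rw [← Equiv.Perm.coe_pow, h]
      exact Function.not_isPeriodicPt_of_pos_of_lt_minimalPeriod hr0.ne'
        (by rw [hlen]; exact hr) hper
    · exact hdist j l (Ne.symm hlj) ⟨r, by rw [zpow_natCast, h]⟩
  have hstep_mid : ∀ (j : Fin d) (r : ℕ), r + 1 < i j →
      β ((α ^ r) (a j)) = (α ^ (r + 1)) (a j) := by
    intro j r hr
    rw [hβdef, Equiv.Perm.mul_apply]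
    have h : α ((α ^ r) (a j)) = (α ^ (r + 1)) (a j) := by
      rw [pow_succ', Equiv.Perm.mul_apply]
    rw [h]
    exact hσ_fix _ (hnotmem j (r + 1) (Nat.succ_pos r) hr)
  have hstep_end : ∀ j : Fin d, β ((α ^ (i j - 1)) (a j)) = a (j + 1) := by
    intro j
    rw [hβdef, Equiv.Perm.mul_apply]
    have h1 : α ((α ^ (i j - 1)) (a j)) = (α ^ (i j)) (a j) := by
      rw [← Equiv.Perm.mul_apply, ← pow_succ']
      congr 2
      have := hipos j
      omega
    have h2 : (α ^ (i j)) (a j) = a j := by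
      have h := Function.iterate_minimalPeriod (f := ⇑α) (x := a j)
      rw [hlen j, ← Equiv.Perm.coe_pow] at h
      exact h
    rw [h1, h2, hσ_a]
  -- trajectory lemma
  have key1 : ∀ (k : Fin d) (t r : ℕ), r < i (k + (t : Fin d)) →
      (β ^ (∑ s ∈ Finset.range t, i (k + (s : Fin d)) + r)) (a k)
        = (α ^ r) (a (k + (t : Fin d))) := by
    intro k
    have inner : ∀ (t : ℕ),
        (β ^ (∑ s ∈ Finset.range t, i (k + (s : Fin d)))) (a k) = a (k + (t : Fin d)) →
        ∀ r, r < i (k + (t : Fin d)) →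
        (β ^ (∑ s ∈ Finset.range t, i (k + (s : Fin d)) + r)) (a k)
          = (α ^ r) (a (k + (t : Fin d))) := by
      intro t hbase r
      induction r with
      | zero => intro _; simpa using hbase
      | succ r ih =>
        intro hr
        have ih' := ih (Nat.lt_of_succ_lt hr)
        rw [← add_assoc, pow_succ', Equiv.Perm.mul_apply, ih']
        exact hstep_mid _ r hr
    have base : ∀ t : ℕ,
        (β ^ (∑ s ∈ Finset.range t, i (k + (s : Fin d)))) (a k) = a (k + (t : Fin d)) := by
      intro t
      induction t with
      | zero => simp
      | succ t ih =>
        have hpos := hipos (k + (t : Fin d))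
        have h1 := inner t ih (i (k + (t : Fin d)) - 1) (by omega)
        have h2 : ∑ s ∈ Finset.range (t + 1), i (k + (s : Fin d))
            = (∑ s ∈ Finset.range t, i (k + (s : Fin d)) + (i (k + (t : Fin d)) - 1)) + 1 := by
          rw [Finset.sum_range_succ]; omega
        rw [h2, pow_succ', Equiv.Perm.mul_apply, h1, hstep_end]
        congr 1
        push_cast
        ring
    exact fun t => inner t (base t)
  have hTd : ∀ k : Fin d, ∑ s ∈ Finset.range d, i (k + (s : Fin d)) = ∑ j, i j := by
    intro k
    rw [← Fin.sum_univ_eq_sum_range (fun s => i (k + (s : Fin d))) d]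
    simp only [Fin.cast_val_eq_self]
    exact Fintype.sum_equiv (Equiv.addLeft k) _ _ (fun j => rfl)
  have key2 : ∀ (k : Fin d) (m m' : ℕ), m < ∑ j, i j → m' < ∑ j, i j →
      (β ^ m) (a k) = (β ^ m') (a k) → m = m' := by
    intro k m m' hm hm' heq
    obtain ⟨t, htd, h1, h2⟩ := exists_block_aux (fun s => i (k + (s : Fin d))) d m
      (by rw [hTd k]; exact hm)
    obtain ⟨t', htd', h1', h2'⟩ := exists_block_aux (fun s => i (k + (s : Fin d))) d m'
      (by rw [hTd k]; exact hm')
    set r := m - ∑ s ∈ Finset.range t, i (k + (s : Fin d)) with hr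
    set r' := m' - ∑ s ∈ Finset.range t', i (k + (s : Fin d)) with hr'
    have hmr : m = ∑ s ∈ Finset.range t, i (k + (s : Fin d)) + r := by omega
    have hmr' : m' = ∑ s ∈ Finset.range t', i (k + (s : Fin d)) + r' := by omega
    have e1 := key1 k t r (by rw [hr]; omega)
    have e1' := key1 k t' r' (by rw [hr']; omega)
    rw [hmr, e1, hmr', e1'] at heq
    have htt : (t : Fin d) = (t' : Fin d) := by
      by_contra hne
      have hne' : k + (t : Fin d) ≠ k + (t' : Fin d) := by
        intro h; exact hne (add_left_cancel h)
      apply hdist _ _ hne'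
      refine ⟨(r : ℤ) - r', ?_⟩
      rw [sub_eq_neg_add, zpow_add, Equiv.Perm.mul_apply, zpow_natCast, heq,
        zpow_neg, zpow_natCast]
      exact Equiv.symm_apply_apply _ _
    have htt2 : t = t' := by
      have h := congrArg Fin.val htt
      rwa [Fin.val_cast_of_lt htd, Fin.val_cast_of_lt htd'] at h
    subst htt2
    have hrr : r = r' := by
      have hinj := Function.iterate_injOn_Iio_minimalPeriod
        (f := ⇑α) (x := a (k + (t : Fin d)))
      rw [hlen] at hinj
      apply hinj (Set.mem_Iio.mpr (by omega)) (Set.mem_Iio.mpr (by omega))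
      simpa only [Equiv.Perm.coe_pow] using heq
    omega
  -- β^N (a k) = a k
  have hret : ∀ k : Fin d, (β ^ (∑ j, i j)) (a k) = a k := by
    intro k
    have h := key1 k d 0 (by
      simp only [Fin.natCast_self, add_zero]
      exact hipos k)
    rw [hTd k] at h
    simpa using h
  have hNpos : 0 < ∑ j, i j := by
    have : Nonempty (Fin d) := ⟨⟨0, hd⟩⟩
    obtain ⟨k⟩ := this
    exact lt_of_lt_of_le (hipos k) (Finset.single_le_sum (fun j _ => Nat.zero_le _)
      (Finset.mem_univ k))
  refine ⟨?_, ?_, hthird⟩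
  · intro k l
    set t := ((l - k : Fin d) : ℕ) with ht
    have hkl : k + (t : Fin d) = l := by
      rw [ht, Fin.cast_val_eq_self]
      exact add_sub_cancel k l
    refine ⟨(∑ s ∈ Finset.range t, i (k + (s : Fin d)) : ℕ), ?_⟩
    have h := key1 k t 0 (by rw [hkl]; exact hipos l)
    rw [zpow_natCast]
    simpa [hkl] using h
  · intro k
    have hper : Function.IsPeriodicPt ⇑β (∑ j, i j) (a k) := by
      show β^[∑ j, i j] (a k) = a k
      rw [← Equiv.Perm.coe_pow, hret k]
    have hple : Function.minimalPeriod ⇑β (a k) ≤ ∑ j, i j :=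
      hper.minimalPeriod_le hNpos
    have hppos : 0 < Function.minimalPeriod ⇑β (a k) :=
      hper.minimalPeriod_pos hNpos
    rcases lt_or_eq_of_le hple with hlt | heq
    · exfalso
      have hp : (β ^ Function.minimalPeriod ⇑β (a k)) (a k) = (β ^ 0) (a k) := by
        have := Function.iterate_minimalPeriod (f := ⇑β) (x := a k)
        rw [← Equiv.Perm.coe_pow] at this
        simpa using this
      have := key2 k _ 0 hlt hNpos hp
      omega
    · exact heq
end

section
/- Let α ∈ S_n be an n-cycle and let σ be a transposition (a b) with a ≠ b. Then σα has exactly two cycles, of lengths m and n−m, where m is the smallest positive integer with α^m(a) = b. -/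
/-- Auxiliary: if `(f ^ p) x = x` then the orbit of `x` under `f` is `p`-periodic. -/
lemma pow_mod_apply_aux {γ : Type*} (f : Equiv.Perm γ) (x : γ) (p : ℕ)
    (hp : (f ^ p) x = x) : ∀ j, (f ^ j) x = (f ^ (j % p)) x := by
  have key : ∀ q, ((f ^ p) ^ q) x = x := by
    intro q
    induction q with
    | zero => rfl
    | succ q ih => rw [pow_succ, Equiv.Perm.mul_apply, hp, ih]
  intro j
  conv_lhs => rw [← Nat.mod_add_div j p]
  rw [pow_add, Equiv.Perm.mul_apply, pow_mul, key]

/-- The full cycle type of a permutation of `Fin n`: the lengths of the nontrivial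
cycles together with one part `1` for each fixed point. -/
def fullCycleType (n : ℕ) (σ : Equiv.Perm (Fin n)) : Multiset ℕ :=
  σ.cycleType + Multiset.replicate (n - σ.support.card) 1

/-- Let `α ∈ S_n` be an `n`-cycle and `σ = (a b)` a transposition.  Then `σα`
(apply `α` first) has exactly two cycles, of lengths `m` and `n - m`, where `m` is the
smallest positive integer with `α^m(a) = b`. -/
theorem cut_n_cycle (n : ℕ) (α : Equiv.Perm (Fin n))
    (hα : α.IsCycle ∧ α.support.card = n) (a b : Fin n) (hab : a ≠ b)
    (m : ℕ) (hm : 0 < m) (hmab : (α ^ m) a = b)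
    (hmin : ∀ l, 0 < l → l < m → (α ^ l) a ≠ b) :
    fullCycleType n (Equiv.swap a b * α) = {m, n - m} := by
  classical
  obtain ⟨hcyc, hcard⟩ := hα
  have hn0 : 0 < n := a.pos
  have hsupp : α.support = Finset.univ :=
    Finset.eq_univ_of_card _ (by rw [hcard, Fintype.card_fin])
  have hmemsup : ∀ x : Fin n, α x ≠ x := fun x =>
    Equiv.Perm.mem_support.1 (hsupp ▸ Finset.mem_univ x)
  have hord : orderOf α = n := by rw [hcyc.orderOf, hcard]
  have hαn : α ^ n = 1 := by simpa [hord] using pow_orderOf_eq_one α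
  have hfix : ∀ d, 0 < d → d < n → (α ^ d) a ≠ a := by
    intro d hd hdn hda
    have h1 : α ^ d = 1 := (hcyc.pow_eq_one_iff' (hmemsup a)).2 hda
    have := orderOf_le_of_pow_eq_one hd h1
    omega
  have hlt : ∀ i j, i < j → j < n → (α ^ i) a ≠ (α ^ j) a := by
    intro i j hij hj h
    apply hfix (j - i) (by omega) (by omega)
    apply (α ^ i).injective
    rw [← Equiv.Perm.mul_apply, ← pow_add, show i + (j - i) = j by omega, ← h]
  have hinj2 : ∀ i j, i < n → j < n → (α ^ i) a = (α ^ j) a → i = j := by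
    intro i j hi hj hij
    rcases Nat.lt_trichotomy i j with h | h | h
    · exact absurd hij (hlt i j h hj)
    · exact h
    · exact absurd hij.symm (hlt j i h hi)
  have hmn : m < n := by
    rcases Nat.lt_or_ge m n with h | h
    · exact h
    · exfalso
      have h2 : (α ^ (m - n)) a = b := by
        have e : α ^ m = α ^ (m - n) * α ^ n := by rw [← pow_add]; congr 1; omega
        rw [e, hαn, mul_one] at hmab; exact hmab
      rcases Nat.eq_zero_or_pos (m - n) with h0 | h0
      · rw [h0, pow_zero] at h2; exact hab h2
      · exact hmin (m - n) h0 (by omega) h2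
  set β := Equiv.swap a b * α with hβdef
  have hβap : ∀ x, β x = Equiv.swap a b (α x) := fun x => rfl
  have hβc : ∀ k, k + 1 < n → k + 1 ≠ m → β ((α ^ k) a) = (α ^ (k + 1)) a := by
    intro k h1 h2
    have e : α ((α ^ k) a) = (α ^ (k + 1)) a := by
      rw [pow_succ', Equiv.Perm.mul_apply]
    rw [hβap, e]
    apply Equiv.swap_apply_of_ne_of_ne
    · intro h; exact hfix (k + 1) (by omega) h1 h
    · intro h; rw [← hmab] at h; exact h2 (hinj2 _ _ h1 hmn h)
  have hβm : β ((α ^ (m - 1)) a) = a := by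
    have e : α ((α ^ (m - 1)) a) = b := by
      have h1 : α * α ^ (m - 1) = α ^ m := by rw [← pow_succ']; congr 1; omega
      rw [← Equiv.Perm.mul_apply, h1, hmab]
    rw [hβap, e, Equiv.swap_apply_right]
  have hβn : β ((α ^ (n - 1)) a) = b := by
    have e : α ((α ^ (n - 1)) a) = a := by
      have h1 : α * α ^ (n - 1) = α ^ n := by rw [← pow_succ']; congr 1; omega
      rw [← Equiv.Perm.mul_apply, h1, hαn, Equiv.Perm.one_apply]
    rw [hβap, e, Equiv.swap_apply_left]
  have hpa : ∀ k, k < m → (β ^ k) a = (α ^ k) a := by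
    intro k
    induction k with
    | zero => intro _; rfl
    | succ k ih =>
      intro hk
      rw [pow_succ', Equiv.Perm.mul_apply, ih (by omega), hβc k (by omega) (by omega)]
  have hβma : (β ^ m) a = a := by
    have h1 : (β ^ m) a = β ((β ^ (m - 1)) a) := by
      conv_lhs => rw [show m = (m - 1) + 1 by omega]
      rw [pow_succ', Equiv.Perm.mul_apply]
    rw [h1, hpa (m - 1) (by omega), hβm]
  have hpb : ∀ k, k < n - m → (β ^ k) b = (α ^ (m + k)) a := by
    intro k
    induction k with
    | zero => intro _; exact hmab.symm
    | succ k ih =>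
      intro hk
      rw [pow_succ', Equiv.Perm.mul_apply, ih (by omega), hβc (m + k) (by omega) (by omega)]
      rfl
  have hβnb : (β ^ (n - m)) b = b := by
    have h1 : (β ^ (n - m)) b = β ((β ^ (n - m - 1)) b) := by
      conv_lhs => rw [show n - m = (n - m - 1) + 1 by omega]
      rw [pow_succ', Equiv.Perm.mul_apply]
    rw [h1, hpb (n - m - 1) (by omega), show m + (n - m - 1) = n - 1 by omega, hβn]
  have hβja : ∀ j, (β ^ j) a = (β ^ (j % m)) a := pow_mod_apply_aux β a m hβma
  have hβjb : ∀ j, (β ^ j) b = (β ^ (j % (n - m))) b := pow_mod_apply_aux β b (n - m) hβnb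
  have hαper : ∀ j, (α ^ j) a = (α ^ (j % n)) a :=
    pow_mod_apply_aux α a n (by rw [hαn]; rfl)
  have hnsc : ¬ β.SameCycle a b := by
    intro h
    obtain ⟨i, hi, h2⟩ := h.exists_pow_eq'
    rw [hβja, hpa _ (Nat.mod_lt i hm)] at h2
    rcases Nat.eq_zero_or_pos (i % m) with h0 | h0
    · rw [h0, pow_zero] at h2; exact hab h2
    · exact hmin _ h0 (Nat.mod_lt i hm) h2
  have hclass : ∀ x, β.SameCycle a x ∨ β.SameCycle b x := by
    intro x
    obtain ⟨i, hi⟩ := hcyc.exists_pow_eq (hmemsup a) (hmemsup x)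
    have hx : (α ^ (i % n)) a = x := by rw [← hαper, hi]
    rcases Nat.lt_or_ge (i % n) m with h | h
    · exact Or.inl ⟨((i % n : ℕ) : ℤ), by rw [zpow_natCast, hpa _ h, hx]⟩
    · refine Or.inr ⟨((i % n - m : ℕ) : ℤ), ?_⟩
      have hkn : i % n < n := Nat.mod_lt i hn0
      rw [zpow_natCast, hpb _ (by omega), show m + (i % n - m) = i % n by omega, hx]
  have hfixa : m = 1 → β a = a := by
    intro h1
    rw [hβap, show α a = b from by rw [← hmab, h1, pow_one], Equiv.swap_apply_right]
  have hmova : 1 < m → β a ≠ a := by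
    intro h1 h2
    have h3 : β a = (α ^ 1) a := by
      have := hβc 0 (by omega) (by omega)
      rwa [pow_zero, Equiv.Perm.one_apply] at this
    rw [h2] at h3
    exact hfix 1 one_pos (by omega) h3.symm
  have hfixb : n - m = 1 → β b = b := by
    intro h1
    have hb : b = (α ^ (n - 1)) a := by rw [show n - 1 = m by omega]; exact hmab.symm
    conv_lhs => rw [hb]
    rw [hβn, hb]
  have hmovb : 1 < n - m → β b ≠ b := by
    intro h1 h2
    have h3 : β b = (α ^ (m + 1)) a := by
      conv_lhs => rw [← hmab]
      exact hβc m (by omega) (by omega)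
    exact absurd (hinj2 m (m + 1) hmn (by omega) (by rw [hmab, ← h2, h3])) (by omega)
  have hsa : β a ≠ a →
      (β.cycleOf a).support = (Finset.range m).image (fun k => (α ^ k) a) := by
    intro h
    ext y
    rw [Equiv.Perm.mem_support_cycleOf_iff]
    constructor
    · rintro ⟨hsc, -⟩
      obtain ⟨i, hi, h2⟩ := hsc.exists_pow_eq'
      rw [hβja, hpa _ (Nat.mod_lt i hm)] at h2
      exact Finset.mem_image.2 ⟨i % m, Finset.mem_range.2 (Nat.mod_lt i hm), h2⟩
    · intro hy
      obtain ⟨k, hk, rfl⟩ := Finset.mem_image.1 hy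
      exact ⟨⟨(k : ℤ), by rw [zpow_natCast, hpa k (Finset.mem_range.1 hk)]⟩,
        Equiv.Perm.mem_support.2 h⟩
  have hcarda : β a ≠ a → (β.cycleOf a).support.card = m := by
    intro h
    rw [hsa h, Finset.card_image_of_injOn, Finset.card_range]
    intro i hi j hj hij
    exact hinj2 i j (lt_trans (Finset.mem_range.1 hi) hmn)
      (lt_trans (Finset.mem_range.1 hj) hmn) hij
  have hsb : β b ≠ b →
      (β.cycleOf b).support = (Finset.range (n - m)).image (fun k => (α ^ (m + k)) a) := by
    intro h
    ext y
    rw [Equiv.Perm.mem_support_cycleOf_iff]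
    constructor
    · rintro ⟨hsc, -⟩
      obtain ⟨i, hi, h2⟩ := hsc.exists_pow_eq'
      rw [hβjb, hpb _ (Nat.mod_lt i (by omega))] at h2
      exact Finset.mem_image.2 ⟨i % (n - m), Finset.mem_range.2 (Nat.mod_lt i (by omega)), h2⟩
    · intro hy
      obtain ⟨k, hk, rfl⟩ := Finset.mem_image.1 hy
      exact ⟨⟨(k : ℤ), by rw [zpow_natCast, hpb k (Finset.mem_range.1 hk)]⟩,
        Equiv.Perm.mem_support.2 h⟩
  have hcardb : β b ≠ b → (β.cycleOf b).support.card = n - m := by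
    intro h
    rw [hsb h, Finset.card_image_of_injOn, Finset.card_range]
    intro i hi j hj hij
    have hi' := Finset.mem_range.1 hi
    have hj' := Finset.mem_range.1 hj
    have := hinj2 (m + i) (m + j) (by omega) (by omega) hij
    omega
  by_cases hm1 : m = 1 <;> by_cases hnm1 : n - m = 1
  · -- m = 1, n - m = 1, so n = 2 and β = 1
    have hβ1 : β = 1 := by
      apply Equiv.ext
      intro x
      rcases hclass x with h | h
      · obtain ⟨i, hi, h2⟩ := h.exists_pow_eq'
        rw [hβja, hm1, Nat.mod_one, pow_zero, Equiv.Perm.one_apply] at h2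
        rw [← h2, hfixa hm1, Equiv.Perm.one_apply]
      · obtain ⟨i, hi, h2⟩ := h.exists_pow_eq'
        rw [hβjb, hnm1, Nat.mod_one, pow_zero, Equiv.Perm.one_apply] at h2
        rw [← h2, hfixb hnm1, Equiv.Perm.one_apply]
    rw [fullCycleType, hβ1]
    simp only [Equiv.Perm.cycleType_one, Equiv.Perm.support_one, Finset.card_empty,
      Nat.sub_zero, zero_add, hm1, hnm1]
    rw [show n = 2 by omega]
    rfl
  · -- m = 1, n - m ≥ 2 : β is an (n-1)-cycle fixing a
    have hb' : β b ≠ b := hmovb (by omega)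
    have hβeq : β = β.cycleOf b := by
      apply Equiv.ext
      intro x
      by_cases h : β.SameCycle b x
      · rw [h.cycleOf_apply]
      · rw [Equiv.Perm.cycleOf_apply_of_not_sameCycle h]
        rcases hclass x with h2 | h2
        · obtain ⟨i, hi, h3⟩ := h2.exists_pow_eq'
          rw [hβja, hm1, Nat.mod_one, pow_zero, Equiv.Perm.one_apply] at h3
          rw [← h3]
          exact hfixa hm1
        · exact absurd h2 h
    have hct : β.cycleType = {n - m} := by
      rw [hβeq, (Equiv.Perm.isCycle_cycleOf β hb').cycleType, hcardb hb']
    have hsc : β.support.card = n - m := by rw [hβeq]; exact hcardb hb'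
    rw [fullCycleType, hct, hsc, show n - (n - m) = m by omega, hm1,
      Multiset.replicate_one]
    rw [Multiset.singleton_add]
    exact Multiset.cons_swap _ _ _
  · -- m ≥ 2, n - m = 1 : β is an m-cycle fixing b
    have ha' : β a ≠ a := hmova (by omega)
    have hβeq : β = β.cycleOf a := by
      apply Equiv.ext
      intro x
      by_cases h : β.SameCycle a x
      · rw [h.cycleOf_apply]
      · rw [Equiv.Perm.cycleOf_apply_of_not_sameCycle h]
        rcases hclass x with h2 | h2
        · exact absurd h2 h
        · obtain ⟨i, hi, h3⟩ := h2.exists_pow_eq'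
          rw [hβjb, hnm1, Nat.mod_one, pow_zero, Equiv.Perm.one_apply] at h3
          rw [← h3]
          exact hfixb hnm1
    have hct : β.cycleType = {m} := by
      rw [hβeq, (Equiv.Perm.isCycle_cycleOf β ha').cycleType, hcarda ha']
    have hsc : β.support.card = m := by rw [hβeq]; exact hcarda ha'
    rw [fullCycleType, hct, hsc, hnm1, Multiset.replicate_one, Multiset.singleton_add,
      Multiset.insert_eq_cons]
  · -- m ≥ 2 and n - m ≥ 2 : two nontrivial cycles
    have ha' : β a ≠ a := hmova (by omega)
    have hb' : β b ≠ b := hmovb (by omega)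
    have h1 : β.cycleOf a ∈ β.cycleFactorsFinset :=
      Equiv.Perm.cycleOf_mem_cycleFactorsFinset_iff.2 (Equiv.Perm.mem_support.2 ha')
    have hdisj := Equiv.Perm.disjoint_mul_inv_of_mem_cycleFactorsFinset h1
    have hδ : β * (β.cycleOf a)⁻¹ = β.cycleOf b := by
      apply Equiv.ext
      intro x
      rw [Equiv.Perm.mul_apply]
      by_cases h : β.SameCycle a x
      · have hxinv : (β.cycleOf a)⁻¹ x = β⁻¹ x := by
          rw [Equiv.Perm.inv_eq_iff_eq]
          have hsc2 : β.SameCycle a (β⁻¹ x) := h.trans ⟨-1, by simp⟩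
          rw [hsc2.cycleOf_apply, ← Equiv.Perm.mul_apply, mul_inv_cancel, Equiv.Perm.one_apply]
        rw [hxinv, ← Equiv.Perm.mul_apply, mul_inv_cancel, Equiv.Perm.one_apply]
        have hnsx : ¬ β.SameCycle b x := fun hbx => hnsc (h.trans hbx.symm)
        rw [Equiv.Perm.cycleOf_apply_of_not_sameCycle hnsx]
      · have hxinv : (β.cycleOf a)⁻¹ x = x := by
          rw [Equiv.Perm.inv_eq_iff_eq, Equiv.Perm.cycleOf_apply_of_not_sameCycle h]
        rw [hxinv, ((hclass x).resolve_left h).cycleOf_apply]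
    have hct : β.cycleType = {n - m} + {m} := by
      have h2 := hdisj.cycleType_mul
      rw [inv_mul_cancel_right] at h2
      rw [h2, hδ, (Equiv.Perm.isCycle_cycleOf β hb').cycleType,
        (Equiv.Perm.isCycle_cycleOf β ha').cycleType, hcarda ha', hcardb hb']
    have hsuppβ : β.support = Finset.univ := by
      apply Finset.eq_univ_of_forall
      intro x
      rw [Equiv.Perm.mem_support]
      obtain ⟨i, hi⟩ := hcyc.exists_pow_eq (hmemsup a) (hmemsup x)
      have hx : (α ^ (i % n)) a = x := by rw [← hαper, hi]
      have hkn : i % n < n := Nat.mod_lt i hn0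
      rw [← hx]
      intro hcontra
      by_cases hk1 : i % n + 1 = m
      · rw [show i % n = m - 1 by omega, hβm] at hcontra
        exact hfix (m - 1) (by omega) (by omega) hcontra.symm
      · by_cases hk2 : i % n + 1 = n
        · rw [show i % n = n - 1 by omega, hβn] at hcontra
          exact absurd (hinj2 m (n - 1) hmn (by omega) (by rw [hmab, hcontra])) (by omega)
        · rw [hβc (i % n) (by omega) hk1] at hcontra
          exact absurd (hinj2 (i % n + 1) (i % n) (by omega) hkn hcontra) (by omega)
    have hsc : β.support.card = n := by
      rw [hsuppβ, Finset.card_univ, Fintype.card_fin]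
    rw [fullCycleType, hct, hsc, Nat.sub_self, Multiset.replicate_zero, add_zero]
    rw [Multiset.singleton_add]
    exact Multiset.cons_swap _ _ _
end

section
/- Let α be an n-cycle in S_n and let d ≤ n. Fix positive integers i₁,…,i_d with i₁ + ⋯ + i_d = n. Then the number of d-tuples (j₁,…,j_d) of distinct elements of {1,…,n} such that α^{i_k}(j_k) = j_{k+1 mod d} for all k (and i_k is minimal with α^{i_k}(j_k) ∈ {j₁,…,j_d}) equals n. -/
private lemma cycle_pow_apply_inj {n : ℕ} (α : Equiv.Perm (Fin n)) (hc : α.IsCycle)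
    (hcard : α.support.card = n) {a b : ℕ} (ha : a < n) (hb : b < n) (x : Fin n)
    (h : (α ^ a) x = (α ^ b) x) : a = b := by
  have horder : orderOf α = n := hc.orderOf.trans hcard
  have hsup : α.support = Finset.univ :=
    Finset.eq_univ_of_card _ (hcard.trans (Fintype.card_fin n).symm)
  have hmove : ∀ y : Fin n, α y ≠ y := by
    intro y
    exact Equiv.Perm.mem_support.mp (hsup ▸ Finset.mem_univ y)
  wlog hab : a ≤ b generalizing a b
  · exact (this hb ha h.symm (le_of_not_ge hab)).symm
  have key : (α ^ (b - a)) ((α ^ a) x) = (α ^ a) x := by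
    rw [← Equiv.Perm.mul_apply, ← pow_add, Nat.sub_add_cancel hab, ← h]
  have h1 : α ^ (b - a) = 1 := (hc.pow_eq_one_iff' (hmove _)).mpr key
  have hdvd : n ∣ b - a := horder ▸ orderOf_dvd_of_pow_eq_one h1
  have h0 : b - a = 0 := by
    rcases Nat.eq_zero_or_pos (b - a) with h0 | h0
    · exact h0
    · exact absurd (Nat.le_of_dvd h0 hdvd) (by omega)
  omega

/-- Let `α` be an `n`-cycle in `S_n` and `d ≤ n`.  Fix positive integers `i₁,…,i_d`
with `i₁ + ⋯ + i_d = n`.  Then the number of `d`-tuples `(j₁,…,j_d)` of distinct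
points such that, walking along `α` starting from `j_k`, the first element of
`{j₁,…,j_d}` encountered is `j_{k+1 (mod d)}`, at distance `i_k`, equals `n`. -/
theorem count_tuples_on_n_cycle (n d : ℕ) [NeZero d] (hdn : d ≤ n)
    (α : Equiv.Perm (Fin n)) (hα : α.IsCycle ∧ α.support.card = n)
    (i : Fin d → ℕ) (hpos : ∀ k, 0 < i k) (hsum : ∑ k, i k = n) :
    Nat.card {j : Fin d → Fin n // Function.Injective j ∧
      ∀ k : Fin d, (α ^ i k) (j k) = j (k + 1) ∧
        ∀ l, 0 < l → l < i k → ∀ k' : Fin d, (α ^ l) (j k) ≠ j k'} = n := by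
  obtain ⟨hc, hcard⟩ := hα
  have hd : 0 < d := Nat.pos_of_ne_zero (NeZero.ne d)
  have horder : orderOf α = n := hc.orderOf.trans hcard
  have hαn : α ^ n = 1 := by have h := pow_orderOf_eq_one α; rwa [horder] at h
  -- extend i to ℕ and define partial sums
  set I : ℕ → ℕ := fun m => if h : m < d then i ⟨m, h⟩ else 0 with hI
  set s : ℕ → ℕ := fun k => ∑ m ∈ Finset.range k, I m with hs
  have hstep : ∀ k, s (k + 1) = s k + I k := fun k => Finset.sum_range_succ I k
  have hsd : s d = n := by
    show ∑ m ∈ Finset.range d, I m = n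
    rw [← Fin.sum_univ_eq_sum_range I d, ← hsum]
    exact Finset.sum_congr rfl fun k _ => by simp [hI, k.isLt]
  have hsmono : Monotone s := fun a b hab =>
    Finset.sum_le_sum_of_subset (Finset.range_subset_range.mpr hab)
  have hsstrict : ∀ a b, a < b → b ≤ d → s a < s b := by
    intro a b hab hbd
    have ha : a < d := lt_of_lt_of_le hab hbd
    have : s a < s (a + 1) := by
      rw [hstep]
      have : I a = i ⟨a, ha⟩ := by simp [hI, ha]
      rw [this]
      exact Nat.lt_add_of_pos_right (hpos _)
    exact lt_of_lt_of_le this (hsmono hab)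
  have hslt : ∀ k : Fin d, s k.val < n := fun k => hsd ▸ hsstrict k.val d k.isLt le_rfl
  have hIval : ∀ k : Fin d, I k.val = i k := fun k => by simp [hI, k.isLt]
  -- the bijection
  set F : Fin n → Fin d → Fin n := fun x k => (α ^ s k.val) x with hF
  have hFmem : ∀ x : Fin n, Function.Injective (F x) ∧
      ∀ k : Fin d, (α ^ i k) (F x k) = F x (k + 1) ∧
        ∀ l, 0 < l → l < i k → ∀ k' : Fin d, (α ^ l) (F x k) ≠ F x k' := by
    intro x
    constructor
    · intro k k' h
      have := cycle_pow_apply_inj α hc hcard (hslt k) (hslt k') x h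
      have : k.val = k'.val := by
        by_contra hne
        rcases Nat.lt_or_ge k.val k'.val with hlt | hge
        · exact absurd this (Nat.ne_of_lt (hsstrict _ _ hlt k'.isLt.le))
        · have : k'.val < k.val := lt_of_le_of_ne hge (fun h => hne h.symm)
          exact absurd ‹s k.val = s k'.val› (Nat.ne_of_gt (hsstrict _ _ this k.isLt.le))
      exact Fin.ext this
    · intro k
      constructor
      · rcases Nat.lt_or_ge (k.val + 1) d with hk1 | hk1
        · have hadd : (k + 1 : Fin d).val = k.val + 1 := by
            simp [Fin.add_def, Nat.mod_eq_of_lt hk1]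
          rw [hF]
          simp only
          rw [hadd, hstep, hIval, ← Equiv.Perm.mul_apply, ← pow_add, Nat.add_comm]
        · -- k = d - 1, wraps to 0
          have hkd : k.val = d - 1 := by omega
          have hadd : (k + 1 : Fin d).val = 0 := by
            simp [Fin.add_def, hkd, Nat.sub_add_cancel hd]
          rw [hF]
          simp only
          rw [hadd, ← Equiv.Perm.mul_apply, ← pow_add]
          have : i k + s k.val = n := by
            rw [← hIval k, Nat.add_comm, ← hstep, hkd, Nat.sub_add_cancel hd, hsd]
          rw [this, hαn]
          simp [hs]
      · intro l hl0 hl k' h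
        rw [hF] at h
        simp only at h
        rw [← Equiv.Perm.mul_apply, ← pow_add] at h
        have hk1 : s k.val + i k = s (k.val + 1) := by rw [hstep, hIval]
        have hub : l + s k.val < n := by
          have : l + s k.val < s (k.val + 1) := by omega
          exact lt_of_lt_of_le this (hsd ▸ hsmono k.isLt)
        have heq := cycle_pow_apply_inj α hc hcard hub (hslt k') x h
        -- s k < l + s k = s k' < s (k+1), contradiction with monotonicity
        rcases Nat.lt_or_ge k'.val (k.val + 1) with hlt | hge
        · have : s k'.val ≤ s k.val := hsmono (by omega)
          omega
        · have : s (k.val + 1) ≤ s k'.val := hsmono hge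
          omega
  have hFinj : Function.Injective F := by
    intro x y h
    have := congrFun h ⟨0, hd⟩
    simpa [hF, hs] using this
  have hFsurj : ∀ j : Fin d → Fin n, (Function.Injective j ∧
      ∀ k : Fin d, (α ^ i k) (j k) = j (k + 1) ∧
        ∀ l, 0 < l → l < i k → ∀ k' : Fin d, (α ^ l) (j k) ≠ j k') →
      F (j ⟨0, hd⟩) = j := by
    intro j ⟨hinj, hcond⟩
    funext k
    rw [hF]
    simp only
    induction' hk : k.val with m ih generalizing k
    · have : k = ⟨0, hd⟩ := Fin.ext hk
      rw [this]
      simp [hs]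
    · have hm : m < d := by omega
      have hkm : k = (⟨m, hm⟩ : Fin d) + 1 := by
        apply Fin.ext
        simp [Fin.add_def, Nat.mod_eq_of_lt (hk ▸ k.isLt), hk]
      have hrec := ih ⟨m, hm⟩ rfl
      rw [hkm, ← (hcond ⟨m, hm⟩).1, ← hrec, ← Equiv.Perm.mul_apply, ← pow_add]
      congr 1
      rw [hstep]
      simp [hI, hm, Nat.add_comm]
  have hbij : Function.Bijective (fun x : Fin n =>
      (⟨F x, hFmem x⟩ : {j : Fin d → Fin n // Function.Injective j ∧
      ∀ k : Fin d, (α ^ i k) (j k) = j (k + 1) ∧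
        ∀ l, 0 < l → l < i k → ∀ k' : Fin d, (α ^ l) (j k) ≠ j k'})) := by
    constructor
    · intro x y h
      exact hFinj (congrArg Subtype.val h)
    · rintro ⟨j, hj⟩
      exact ⟨j ⟨0, hd⟩, Subtype.ext (hFsurj j hj)⟩
  rw [← Nat.card_eq_of_bijective _ hbij, Nat.card_eq_fintype_card, Fintype.card_fin]
end

section
/- For any d-cycle β ∈ S_d, the operator Δ_β = (1/d) Σ_{δ ∈ S_d} Σ_{a₁,…,a_d ≥ 1} p̂_{βδ}(a₁,…,a_d) ∂/∂p̂_δ(a₁,…,a_d) is independent of the choice of the d-cycle β; in particular Δ_β = Δ_d for all d-cycles β. -/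
open MvPolynomial

noncomputable def PhiMap (n : ℕ) (σ : Equiv.Perm (Fin n)) : MvPolynomial ℕ ℂ :=
  (σ.cycleType.map fun m => (X m : MvPolynomial ℕ ℂ)).prod *
    (X 1 : MvPolynomial ℕ ℂ) ^ (n - σ.support.card)

/-- The set of cycles (orbits, including fixed points) of a permutation of `Fin d`. -/
noncomputable def orbitsOf {d : ℕ} (δ : Equiv.Perm (Fin d)) : Finset (Finset (Fin d)) :=
  Finset.univ.image fun j => Finset.univ.filter fun k => δ.SameCycle j k

/-- The multiset of sums `Σ_{j ∈ δ_i} a_j` over the cycles `δ_i` of `δ`. -/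
noncomputable def orbitSums {d : ℕ} (δ : Equiv.Perm (Fin d)) (a : Fin d → ℕ) :
    Multiset ℕ :=
  (orbitsOf δ).val.map fun O => ∑ j ∈ O, a j

/-- `p̂_δ(a₁,…,a_d) = ∏_i p_{Σ_{j∈δ_i} a_j}`. -/
noncomputable def phat {d : ℕ} (δ : Equiv.Perm (Fin d)) (a : Fin d → ℕ) :
    MvPolynomial ℕ ℂ :=
  ((orbitSums δ a).map fun m => (X m : MvPolynomial ℕ ℂ)).prod

/-- `∂/∂p̂_δ(a₁,…,a_d) = ∏_i ((Σ_{j∈δ_i} a_j) ∂/∂p_{Σ_{j∈δ_i} a_j})` applied to `F`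
(the partial derivatives commute, so they are applied in a canonical order). -/
noncomputable def phatDeriv {d : ℕ} (δ : Equiv.Perm (Fin d)) (a : Fin d → ℕ)
    (F : MvPolynomial ℕ ℂ) : MvPolynomial ℕ ℂ :=
  ((orbitSums δ a).map fun m => (m : ℂ)).prod •
    ((orbitSums δ a).sort (· ≤ ·)).foldr (fun m G => pderiv m G) F

/-- `Δ_β = (1/d) Σ_{δ ∈ S_d} Σ_{a₁,…,a_d ≥ 1} p̂_{βδ}(a) ∂/∂p̂_δ(a)`. -/
noncomputable def DeltaBeta {d : ℕ} (β : Equiv.Perm (Fin d))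
    (F : MvPolynomial ℕ ℂ) : MvPolynomial ℕ ℂ :=
  (1 / (d : ℂ)) • ∑ δ : Equiv.Perm (Fin d),
    ∑ᶠ (a : Fin d → ℕ) (_ : ∀ j, 1 ≤ a j), phat (β * δ) a * phatDeriv δ a F

/-- The `d`-cycle `(d d-1 … 2 1)` sending `k` to `k - 1 (mod d)`. -/
def rotCycle (d : ℕ) [NeZero d] : Equiv.Perm (Fin d) := Equiv.subRight (1 : Fin d)

/-- `Δ_d = Δ_{(d … 2 1)}`. -/
noncomputable def DeltaD (d : ℕ) [NeZero d] (F : MvPolynomial ℕ ℂ) :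
    MvPolynomial ℕ ℂ :=
  DeltaBeta (rotCycle d) F

lemma orbitsOf_conj {d : ℕ} (γ δ : Equiv.Perm (Fin d)) :
    orbitsOf (γ * δ * γ⁻¹) = (orbitsOf δ).image (Finset.image γ) := by
  unfold orbitsOf
  rw [Finset.image_image]
  have huniv : (Finset.univ : Finset (Fin d)).image γ = Finset.univ :=
    Finset.image_univ_equiv γ
  conv_lhs => rw [← huniv, Finset.image_image]
  apply Finset.image_congr
  intro j _
  ext k
  simp only [Function.comp_apply, Finset.mem_filter, Finset.mem_univ, true_and,
    Finset.mem_image, Equiv.Perm.sameCycle_conj, Equiv.Perm.coe_inv, Equiv.symm_apply_apply]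
  constructor
  · rintro ⟨-, h⟩
    exact ⟨γ⁻¹ k, h, by simp⟩
  · rintro ⟨x, hx, rfl⟩
    exact ⟨⟨x, rfl⟩, by simpa using hx⟩

lemma orbitSums_conj {d : ℕ} (γ δ : Equiv.Perm (Fin d)) (a : Fin d → ℕ) :
    orbitSums (γ * δ * γ⁻¹) a = orbitSums δ (a ∘ γ) := by
  unfold orbitSums
  rw [orbitsOf_conj,
    Finset.image_val_of_injOn ((Finset.image_injective γ.injective).injOn),
    Multiset.map_map]
  apply Multiset.map_congr rfl
  intro O _
  simp only [Function.comp_apply]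
  rw [Finset.sum_image (fun x _ y _ h => γ.injective h)]

lemma phat_conj {d : ℕ} (γ σ : Equiv.Perm (Fin d)) (a : Fin d → ℕ) :
    phat (γ * σ * γ⁻¹) a = phat σ (a ∘ γ) := by
  unfold phat; rw [orbitSums_conj]

lemma phatDeriv_conj {d : ℕ} (γ σ : Equiv.Perm (Fin d)) (a : Fin d → ℕ)
    (F : MvPolynomial ℕ ℂ) :
    phatDeriv (γ * σ * γ⁻¹) a F = phatDeriv σ (a ∘ γ) F := by
  unfold phatDeriv; rw [orbitSums_conj]

/-- For any `d`-cycle `β ∈ S_d`, the operator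
`Δ_β = (1/d) Σ_{δ ∈ S_d} Σ_{a₁,…,a_d ≥ 1} p̂_{βδ}(a) ∂/∂p̂_δ(a)` is independent of the
choice of the `d`-cycle `β`; in particular `Δ_β = Δ_d` for every `d`-cycle `β`. -/
theorem DeltaBeta_eq_DeltaD (d : ℕ) [NeZero d] (β : Equiv.Perm (Fin d))
    (hβ : β.IsCycle ∧ β.support.card = d) (F : MvPolynomial ℕ ℂ) :
    DeltaBeta β F = DeltaD d F := by
  obtain ⟨hc, hcard⟩ := hβ
  have hd2 : 2 ≤ d := hcard ▸ hc.two_le_card_support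
  -- the rotation cycle is (finRotate d)⁻¹
  have hrot : rotCycle d = (finRotate d)⁻¹ := by
    apply Equiv.ext
    intro k
    apply (finRotate d).injective
    rw [Equiv.Perm.coe_inv, Equiv.apply_symm_apply]
    rcases d with - | n
    · exact absurd rfl (NeZero.ne 0)
    · simp [rotCycle, finRotate_succ_apply, Equiv.subRight_apply]
  have hrotC : (rotCycle d).IsCycle := by
    rw [hrot]; exact (isCycle_finRotate_of_le hd2).inv
  have hrotS : (rotCycle d).support.card = d := by
    rw [hrot, Equiv.Perm.support_inv, support_finRotate_of_le hd2,
      Finset.card_univ, Fintype.card_fin]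
  obtain ⟨γ, hγ⟩ := isConj_iff.mp (hrotC.isConj hc (by rw [hrotS, hcard]))
  -- hγ : γ * rotCycle d * γ⁻¹ = β
  unfold DeltaD DeltaBeta
  congr 1
  refine Fintype.sum_equiv (MulAut.conj γ⁻¹).toEquiv _ _ fun δ => ?_
  set σ : Equiv.Perm (Fin d) := (MulAut.conj γ⁻¹).toEquiv δ with hσ
  have hσ' : σ = γ⁻¹ * δ * γ := by
    simp [hσ, MulAut.conj_apply]
  have h2 : δ = γ * σ * γ⁻¹ := by rw [hσ']; group
  have h1 : β * δ = γ * (rotCycle d * σ) * γ⁻¹ := by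
    rw [h2, ← hγ]; group
  rw [h1]
  conv_lhs => rw [h2]
  rw [← finsum_comp_equiv (Equiv.arrowCongr γ.symm (Equiv.refl ℕ))
      (f := fun a => ∑ᶠ (_ : ∀ j, 1 ≤ a j), phat (rotCycle d * σ) a * phatDeriv σ a F)]
  apply finsum_congr
  intro a
  have ha : (Equiv.arrowCongr γ.symm (Equiv.refl ℕ)) a = a ∘ γ := by
    ext j; simp [Equiv.arrowCongr]
  rw [ha, phat_conj, phatDeriv_conj]
  have hp : (∀ j, 1 ≤ a j) = (∀ j, 1 ≤ (a ∘ γ) j) :=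
    propext ⟨fun h j => h _, fun h j => by simpa using h (γ.symm j)⟩
  rw [hp]
end

section
/- Let α ∈ S_n and let i₁, i₂ be positive integers with i₁ ≠ i₂. The number of pairs (j₁, j₂) of points lying in a common cycle of α of length i₁+i₂ with α^{i₂}(j₂) = j₁ and α^{i₁}(j₁) = j₂ equals c·(i₁+i₂), where c is the number of cycles of α of length i₁+i₂; and for each such pair, (j₁ j₂)·α has the same cycles as α except the cycle through j₁, j₂ is split into two cycles of lengths i₁ and i₂. -/
/-- Let `α ∈ S_n` and `i₁ ≠ i₂` positive.  The number of pairs `(j₁, j₂)` lying in a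
common cycle of `α` of length `i₁+i₂` with `α^{i₂}(j₂) = j₁` and `α^{i₁}(j₁) = j₂`
equals `c·(i₁+i₂)`, where `c` is the number of cycles of `α` of length `i₁+i₂`
(encoded by the fact that the set of points on such cycles has cardinality
`c·(i₁+i₂)`); and for each such pair, `(j₁ j₂)·α` has the same cycles as `α` except
that the cycle through `j₁, j₂` is split into two cycles of lengths `i₁` and `i₂`. -/
theorem cut_count_and_split (n : ℕ) (α : Equiv.Perm (Fin n)) (i₁ i₂ c : ℕ)
    (h₁ : 0 < i₁) (h₂ : 0 < i₂) (hne : i₁ ≠ i₂)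
    (hc : Nat.card {x : Fin n // Function.minimalPeriod ⇑α x = i₁ + i₂}
      = c * (i₁ + i₂)) :
    Nat.card {t : Fin n × Fin n // α.SameCycle t.1 t.2 ∧
        Function.minimalPeriod ⇑α t.1 = i₁ + i₂ ∧
        (α ^ i₂) t.2 = t.1 ∧ (α ^ i₁) t.1 = t.2} = c * (i₁ + i₂) ∧
    ∀ j₁ j₂ : Fin n, α.SameCycle j₁ j₂ →
      Function.minimalPeriod ⇑α j₁ = i₁ + i₂ →
      (α ^ i₂) j₂ = j₁ → (α ^ i₁) j₁ = j₂ →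
      (¬ (Equiv.swap j₁ j₂ * α).SameCycle j₁ j₂ ∧
        Function.minimalPeriod ⇑(Equiv.swap j₁ j₂ * α) j₁ = i₁ ∧
        Function.minimalPeriod ⇑(Equiv.swap j₁ j₂ * α) j₂ = i₂ ∧
        ∀ x : Fin n, ¬ α.SameCycle x j₁ → (Equiv.swap j₁ j₂ * α) x = α x) := by
  constructor
  · -- count part: bijection with the point set
    rw [← hc]
    apply Nat.card_congr
    refine
      { toFun := fun t => ⟨t.1.1, t.2.2.1⟩
        invFun := fun x => ⟨(x.1, (α ^ i₁) x.1), ?_, ?_, ?_, rfl⟩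
        left_inv := ?_
        right_inv := fun x => rfl }
    · exact ⟨(i₁ : ℤ), by rw [zpow_natCast]⟩
    · exact x.2
    · have : (α ^ (i₁ + i₂)) x.1 = x.1 := by
        have := Function.isPeriodicPt_minimalPeriod ⇑α x.1
        rw [x.2] at this
        simpa only [Function.IsPeriodicPt, Function.IsFixedPt, Equiv.Perm.iterate_eq_pow] using this
      rw [← Equiv.Perm.mul_apply, ← pow_add, add_comm, this]
    · rintro ⟨⟨a, b⟩, hsc, hmp, hpow2, hpow1⟩
      exact Subtype.ext (Prod.ext rfl hpow1)
  · intro j₁ j₂ hsc hmp hpow2 hpow1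
    set β := Equiv.swap j₁ j₂ * α with hβ
    have hαP : (α ^ (i₁ + i₂)) j₁ = j₁ := by
      have := Function.isPeriodicPt_minimalPeriod ⇑α j₁
      rw [hmp] at this
      simpa only [Function.IsPeriodicPt, Function.IsFixedPt, Equiv.Perm.iterate_eq_pow] using this
    have inj : ∀ a b : ℕ, a < i₁ + i₂ → b < i₁ + i₂ → (α ^ a) j₁ = (α ^ b) j₁ → a = b := by
      intro a b ha hb hab
      have := Function.iterate_injOn_Iio_minimalPeriod (f := ⇑α) (x := j₁)
        (by rw [hmp]; exact ha) (by rw [hmp]; exact hb)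
      simp only [Equiv.Perm.iterate_eq_pow] at this
      exact this hab
    have hj12 : j₁ ≠ j₂ := by
      intro h
      have : (α ^ i₁) j₁ = (α ^ 0) j₁ := by rw [pow_zero]; simpa [← h] using hpow1
      have := inj i₁ 0 (by omega) (by omega) this
      omega
    -- β agrees with α-powers on the first arc
    have keyA : ∀ k, k < i₁ → (β ^ k) j₁ = (α ^ k) j₁ := by
      intro k hk
      induction k with
      | zero => simp
      | succ m ih =>
        have hm : m < i₁ := by omega
        rw [pow_succ', Equiv.Perm.mul_apply, ih hm, hβ, Equiv.Perm.mul_apply,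
          ← Equiv.Perm.mul_apply α, ← pow_succ']
        apply Equiv.swap_apply_of_ne_of_ne
        · intro h
          have : (α ^ (m + 1)) j₁ = (α ^ 0) j₁ := by rw [pow_zero]; simpa using h
          have := inj (m + 1) 0 (by omega) (by omega) this
          omega
        · intro h
          rw [← hpow1] at h
          have := inj (m + 1) i₁ (by omega) (by omega) h
          omega
    have keyfix1 : (β ^ i₁) j₁ = j₁ := by
      obtain ⟨m, rfl⟩ : ∃ m, i₁ = m + 1 := ⟨i₁ - 1, by omega⟩
      rw [pow_succ', Equiv.Perm.mul_apply, keyA m (by omega), hβ, Equiv.Perm.mul_apply,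
        ← Equiv.Perm.mul_apply α, ← pow_succ', hpow1, Equiv.swap_apply_right]
    have keyB : ∀ k, k < i₂ → (β ^ k) j₂ = (α ^ (i₁ + k)) j₁ := by
      intro k hk
      induction k with
      | zero => simpa using hpow1.symm
      | succ m ih =>
        have hm : m < i₂ := by omega
        rw [pow_succ', Equiv.Perm.mul_apply, ih hm, hβ, Equiv.Perm.mul_apply,
          ← Equiv.Perm.mul_apply α, ← pow_succ', ← add_assoc]
        apply Equiv.swap_apply_of_ne_of_ne
        · intro h
          have : (α ^ (i₁ + m + 1)) j₁ = (α ^ 0) j₁ := by rw [pow_zero]; simpa using h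
          have := inj (i₁ + m + 1) 0 (by omega) (by omega) this
          omega
        · intro h
          rw [← hpow1] at h
          have := inj (i₁ + m + 1) i₁ (by omega) (by omega) h
          omega
    have keyfix2 : (β ^ i₂) j₂ = j₂ := by
      obtain ⟨m, hm⟩ : ∃ m, i₂ = m + 1 := ⟨i₂ - 1, by omega⟩
      rw [hm, pow_succ', Equiv.Perm.mul_apply, keyB m (by omega), hβ, Equiv.Perm.mul_apply,
        ← Equiv.Perm.mul_apply α, ← pow_succ']
      have : i₁ + m + 1 = i₁ + i₂ := by omega
      rw [this, hαP, Equiv.swap_apply_left]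
    have hper1 : Function.IsPeriodicPt ⇑β i₁ j₁ := keyfix1
    have hper2 : Function.IsPeriodicPt ⇑β i₂ j₂ := keyfix2
    have hmp1 : Function.minimalPeriod ⇑β j₁ = i₁ := by
      have hpos := hper1.minimalPeriod_pos h₁
      have hle : Function.minimalPeriod ⇑β j₁ ≤ i₁ := hper1.minimalPeriod_le h₁
      by_contra h
      obtain ⟨m, hmpos, hmlt, hmfix⟩ :
          ∃ m, 0 < m ∧ m < i₁ ∧ (β ^ m) j₁ = j₁ :=
        ⟨_, hpos, lt_of_le_of_ne hle h, Function.iterate_minimalPeriod⟩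
      rw [keyA _ hmlt] at hmfix
      have : (α ^ m) j₁ = (α ^ 0) j₁ := by rw [pow_zero]; simpa using hmfix
      have := inj m 0 (by omega) (by omega) this
      omega
    have hmp2 : Function.minimalPeriod ⇑β j₂ = i₂ := by
      have hpos := hper2.minimalPeriod_pos h₂
      have hle : Function.minimalPeriod ⇑β j₂ ≤ i₂ := hper2.minimalPeriod_le h₂
      by_contra h
      obtain ⟨m, hmpos, hmlt, hmfix⟩ :
          ∃ m, 0 < m ∧ m < i₂ ∧ (β ^ m) j₂ = j₂ :=
        ⟨_, hpos, lt_of_le_of_ne hle h, Function.iterate_minimalPeriod⟩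
      rw [keyB _ hmlt, ← hpow1] at hmfix
      have := inj (i₁ + m) i₁ (by omega) (by omega) hmfix
      omega
    refine ⟨?_, hmp1, hmp2, ?_⟩
    · intro h
      obtain ⟨i, hi, hpow⟩ := h.exists_pow_eq'
      have hmod : (β ^ (i % i₁)) j₁ = j₂ := by
        have := Function.iterate_mod_minimalPeriod_eq (f := ⇑β) (x := j₁) (n := i)
        rw [hmp1] at this
        simp only [Equiv.Perm.iterate_eq_pow] at this
        rw [this, hpow]
      have hlt : i % i₁ < i₁ := Nat.mod_lt _ h₁
      rw [keyA _ hlt, ← hpow1] at hmod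
      have := inj _ i₁ (by omega) (by omega) hmod
      omega
    · intro x hx
      have hx1 : α x ≠ j₁ := by
        intro h
        exact hx ⟨(1 : ℤ), by simpa using h⟩
      have hx2 : α x ≠ j₂ := by
        intro h
        apply hx
        refine ⟨((i₂ : ℤ) + 1), ?_⟩
        rw [zpow_add, zpow_one, zpow_natCast, Equiv.Perm.mul_apply, h, hpow2]
      rw [hβ, Equiv.Perm.mul_apply, Equiv.swap_apply_of_ne_of_ne hx1 hx2]
end
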